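/- For all real numbers t < T, σ > 0 and δ > 0, one has δ ∫_t^T e^{−δ(u−t)} N(−σ√(u−t)) du = 1/2 − e^{−δ(T−t)} N(−σ√(T−t)) − (σ/√(2δ+σ²)) · (N(√((2δ+σ²)(T−t))) − 1/2). -/

import Mathlib

open MeasureTheory Real Set Filter

/-- Standard normal cdf `N(x)`. -/
noncomputable def stdCdf (x : ℝ) : ℝ := ∫ y in Set.Iic x, Real.exp (-y ^ 2 / 2) / Real.sqrt (2 * Real.pi)

noncomputable def stdPdf (y : ℝ) : ℝ := Real.exp (-y ^ 2 / 2) / Real.sqrt (2 * Real.pi)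

lemma stdPdf_cont : Continuous stdPdf := by
  unfold stdPdf; fun_prop

lemma stdPdf_eq : stdPdf = fun y => Real.exp (-(1/2) * y ^ 2) / Real.sqrt (2 * Real.pi) := by
  funext y; unfold stdPdf; ring_nf

lemma stdPdf_neg (y : ℝ) : stdPdf (-y) = stdPdf y := by
  unfold stdPdf; ring_nf

lemma stdPdf_integrable : Integrable stdPdf := by
  rw [stdPdf_eq]
  exact (integrable_exp_neg_mul_sq (by norm_num : (0:ℝ) < 1/2)).div_const _

lemma stdPdf_total : ∫ y, stdPdf y = 1 := by
  rw [stdPdf_eq]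
  rw [integral_div, integral_gaussian, show (Real.pi / (1/2)) = 2 * Real.pi by ring]
  exact div_self (by positivity)

lemma stdCdf_def (x : ℝ) : stdCdf x = ∫ y in Set.Iic x, stdPdf y := rfl

lemma stdCdf_zero : stdCdf 0 = 1 / 2 := by
  have h2 : (∫ y in Ioi (0:ℝ), stdPdf y) = stdCdf 0 := by
    rw [stdCdf_def]
    rw [show (Iic (0:ℝ)) = Iic (-(0:ℝ)) by norm_num, ← integral_comp_neg_Ioi]
    simp [stdPdf_neg]
  have h3 := intervalIntegral.integral_Iic_add_Ioi (b := (0:ℝ)) (μ := volume) (f := stdPdf)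
    stdPdf_integrable.integrableOn stdPdf_integrable.integrableOn
  rw [h2, stdPdf_total, ← stdCdf_def] at h3
  linarith

lemma stdCdf_eq (x : ℝ) : stdCdf x = 1 / 2 + ∫ y in (0:ℝ)..x, stdPdf y := by
  have h := intervalIntegral.integral_Iic_sub_Iic (μ := volume) (f := stdPdf) (a := (0:ℝ)) (b := x)
    stdPdf_integrable.integrableOn stdPdf_integrable.integrableOn
  rw [← stdCdf_def, ← stdCdf_def, stdCdf_zero] at h
  linarith

lemma hasDerivAt_stdCdf (x : ℝ) : HasDerivAt stdCdf (stdPdf x) x := by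
  have h : HasDerivAt (fun u => ∫ y in (0:ℝ)..u, stdPdf y) (stdPdf x) x :=
    intervalIntegral.integral_hasDerivAt_right (stdPdf_integrable.intervalIntegrable)
      (stdPdf_cont.stronglyMeasurable.stronglyMeasurableAtFilter)
      stdPdf_cont.continuousAt
  have h2 := h.const_add (1/2 : ℝ)
  rw [show stdCdf = fun x => 1 / 2 + ∫ y in (0:ℝ)..x, stdPdf y from funext stdCdf_eq]
  exact h2

lemma stdCdf_continuous : Continuous stdCdf :=
  continuous_iff_continuousAt.2 fun x => (hasDerivAt_stdCdf x).continuousAt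

theorem discounted_cdf_integral_identity (t T σ δ : ℝ) (htT : t < T) (hσ : 0 < σ) (hδ : 0 < δ) :
    δ * ∫ u in t..T, Real.exp (-δ * (u - t)) * stdCdf (-(σ * Real.sqrt (u - t)))
      = 1 / 2 - Real.exp (-δ * (T - t)) * stdCdf (-(σ * Real.sqrt (T - t)))
        - σ / Real.sqrt (2 * δ + σ ^ 2) *
          (stdCdf (Real.sqrt ((2 * δ + σ ^ 2) * (T - t))) - 1 / 2) := by
  set c : ℝ := 2 * δ + σ ^ 2 with hc_def
  have hc : 0 < c := by positivity
  set F : ℝ → ℝ := fun u =>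
    -(Real.exp (-δ * (u - t)) * stdCdf (-(σ * Real.sqrt (u - t))))
      - σ / Real.sqrt c * stdCdf (Real.sqrt (c * (u - t))) with hF_def
  have hFcont : Continuous F := by
    have h2 : Continuous fun u : ℝ => stdCdf (-(σ * Real.sqrt (u - t))) :=
      stdCdf_continuous.comp (by continuity)
    have h3 : Continuous fun u : ℝ => stdCdf (Real.sqrt (c * (u - t))) :=
      stdCdf_continuous.comp (by continuity)
    exact (((by continuity : Continuous fun u : ℝ => Real.exp (-δ * (u - t))).mul h2).neg).sub
      (continuous_const.mul h3)
  have hderiv : ∀ u ∈ Ioo t T, HasDerivAt F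
      (δ * (Real.exp (-δ * (u - t)) * stdCdf (-(σ * Real.sqrt (u - t))))) u := by
    intro u hu
    have hs0 : 0 < u - t := sub_pos.2 hu.1
    have hsqs : 0 < Real.sqrt (u - t) := Real.sqrt_pos.2 hs0
    have h1 : HasDerivAt (fun u : ℝ => u - t) 1 u := (hasDerivAt_id u).sub_const t
    have hs : HasDerivAt (fun u : ℝ => Real.sqrt (u - t)) (1 / (2 * Real.sqrt (u - t))) u := by
      have := (Real.hasDerivAt_sqrt (ne_of_gt hs0)).comp u h1
      simpa [Function.comp_def] using this
    have hexp : HasDerivAt (fun u : ℝ => Real.exp (-δ * (u - t)))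
        (Real.exp (-δ * (u - t)) * (-δ)) u := by
      have hin : HasDerivAt (fun u : ℝ => -δ * (u - t)) (-δ) u := by
        simpa using h1.const_mul (-δ)
      exact (Real.hasDerivAt_exp _).comp u hin
    have hN1 : HasDerivAt (fun u : ℝ => stdCdf (-(σ * Real.sqrt (u - t))))
        (stdPdf (-(σ * Real.sqrt (u - t))) * (-(σ * (1 / (2 * Real.sqrt (u - t)))))) u := by
      have hin : HasDerivAt (fun u : ℝ => -(σ * Real.sqrt (u - t)))
          (-(σ * (1 / (2 * Real.sqrt (u - t))))) u := (hs.const_mul σ).neg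
      exact (hasDerivAt_stdCdf _).comp u hin
    have hcs0 : 0 < c * (u - t) := mul_pos hc hs0
    have hN2 : HasDerivAt (fun u : ℝ => stdCdf (Real.sqrt (c * (u - t))))
        (stdPdf (Real.sqrt (c * (u - t))) * (1 / (2 * Real.sqrt (c * (u - t))) * c)) u := by
      have hin : HasDerivAt (fun u : ℝ => Real.sqrt (c * (u - t)))
          (1 / (2 * Real.sqrt (c * (u - t))) * c) u := by
        have hm : HasDerivAt (fun u : ℝ => c * (u - t)) c u := by simpa using h1.const_mul c
        exact (Real.hasDerivAt_sqrt (ne_of_gt hcs0)).comp u hm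
      exact (hasDerivAt_stdCdf _).comp u hin
    have hF' : HasDerivAt F
        (-(Real.exp (-δ * (u - t)) * (-δ) * stdCdf (-(σ * Real.sqrt (u - t)))
            + Real.exp (-δ * (u - t)) *
              (stdPdf (-(σ * Real.sqrt (u - t))) * (-(σ * (1 / (2 * Real.sqrt (u - t)))))))
          - σ / Real.sqrt c *
            (stdPdf (Real.sqrt (c * (u - t))) * (1 / (2 * Real.sqrt (c * (u - t))) * c))) u :=
      ((hexp.mul hN1).neg).sub (hN2.const_mul _)
    convert hF' using 1
    -- key cancellation
    have hsplit : Real.sqrt (c * (u - t)) = Real.sqrt c * Real.sqrt (u - t) :=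
      Real.sqrt_mul hc.le _
    have hsqc : 0 < Real.sqrt c := Real.sqrt_pos.2 hc
    have hkey : Real.exp (-δ * (u - t)) * stdPdf (-(σ * Real.sqrt (u - t)))
        = stdPdf (Real.sqrt (c * (u - t))) := by
      unfold stdPdf
      rw [Real.sq_sqrt hcs0.le]
      rw [show (-(σ * Real.sqrt (u - t))) ^ 2 = σ ^ 2 * Real.sqrt (u - t) ^ 2 by ring,
        Real.sq_sqrt hs0.le]
      rw [show Real.exp (-δ * (u - t)) * (Real.exp (-(σ ^ 2 * (u - t)) / 2) / Real.sqrt (2 * Real.pi))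
          = Real.exp (-δ * (u - t)) * Real.exp (-(σ ^ 2 * (u - t)) / 2) / Real.sqrt (2 * Real.pi) by ring,
        ← Real.exp_add]
      congr 2
      rw [hc_def]; ring
    rw [← hkey]
    have h2 : Real.sqrt c * Real.sqrt c = c := Real.mul_self_sqrt hc.le
    field_simp
    rw [mul_comm (u - t) c, hsplit]
    linear_combination (-(Real.sqrt (u - t) * σ * stdPdf (-(σ * Real.sqrt (u - t))))) * h2
      + (-(Real.sqrt (u - t) * σ * stdPdf (-(σ * Real.sqrt (u - t))))) * hc_def
  have hInt : IntervalIntegrable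
      (fun u => δ * (Real.exp (-δ * (u - t)) * stdCdf (-(σ * Real.sqrt (u - t))))) volume t T := by
    apply Continuous.intervalIntegrable
    exact continuous_const.mul ((by continuity : Continuous fun u : ℝ => Real.exp (-δ * (u - t))).mul
      (stdCdf_continuous.comp (by continuity)))
  have hFTC := intervalIntegral.integral_eq_sub_of_hasDeriv_right_of_le htT.le
    hFcont.continuousOn (fun u hu => (hderiv u hu).hasDerivWithinAt) hInt
  rw [intervalIntegral.integral_const_mul] at hFTC
  rw [hFTC, hF_def]
  simp only [sub_self, Real.sqrt_zero, mul_zero, neg_zero, Real.exp_zero, one_mul]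
  rw [stdCdf_zero]
  ring
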